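/- Let x : V → ℝ≥0 and P : V → V → ℝ with 0 ≤ P(u,v) ≤ 1 and ∑_v P(u,v) = 1 for all u. For S ⊆ V define ρ(u,S) = ∑_{v∈S} P(u,v), and assume ρ(u,S) < 1 for all u. Then ∑_{u∈V} x(u)(1-ρ(u,S)) ∑_{v∈V∖S} (P(u,v)/(1-ρ(u,S)))(1 - P(u,v)/(1-ρ(u,S))) ≤ ∑_{u∈V} x(u) ∑_{v∈V} P(u,v)(1-P(u,v)). That is, the expected uncertainty after monitoring the nodes in S (ParentTransitions queries) is at most the initial uncertainty F₀. -/

import Mathlib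

open Finset

theorem parentTransitions_decreases_uncertainty
    {V : Type*} [Fintype V] [DecidableEq V]
    (x : V → ℝ) (hx : ∀ u, 0 ≤ x u)
    (P : V → V → ℝ) (hP0 : ∀ u v, 0 ≤ P u v) (hP1 : ∀ u v, P u v ≤ 1)
    (hrow : ∀ u, ∑ v, P u v = 1)
    (S : Finset V) (hρ : ∀ u, ∑ v ∈ S, P u v < 1) :
    ∑ u, x u * (1 - ∑ v ∈ S, P u v) *
        ∑ v ∈ univ \ S,
          (P u v / (1 - ∑ w ∈ S, P u w)) * (1 - P u v / (1 - ∑ w ∈ S, P u w))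
      ≤ ∑ u, x u * ∑ v, P u v * (1 - P u v) := by
  apply Finset.sum_le_sum
  intro u _
  set ρ := ∑ v ∈ S, P u v with hρdef
  have hc : 0 < 1 - ρ := by linarith [hρ u]
  have hρ0 : 0 ≤ ρ := Finset.sum_nonneg fun v _ => hP0 u v
  rw [mul_assoc]
  apply mul_le_mul_of_nonneg_left _ (hx u)
  calc (1 - ρ) * ∑ v ∈ univ \ S, (P u v / (1 - ρ)) * (1 - P u v / (1 - ρ))
      = ∑ v ∈ univ \ S, (P u v - (P u v)^2 / (1 - ρ)) := by
        rw [Finset.mul_sum]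
        apply Finset.sum_congr rfl
        intro v _
        field_simp
    _ ≤ ∑ v ∈ univ \ S, P u v * (1 - P u v) := by
        apply Finset.sum_le_sum
        intro v _
        have h1 : (P u v)^2 * (1 - ρ) ≤ (P u v)^2 * 1 :=
          mul_le_mul_of_nonneg_left (by linarith) (sq_nonneg _)
        have h2 : (P u v)^2 ≤ (P u v)^2 / (1 - ρ) := by
          rw [le_div_iff₀ hc]; linarith
        nlinarith [sq_nonneg (P u v)]
    _ ≤ ∑ v, P u v * (1 - P u v) := by
        apply Finset.sum_le_sum_of_subset_of_nonneg (Finset.sdiff_subset)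
        intro v _ _
        exact mul_nonneg (hP0 u v) (by linarith [hP1 u v])
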